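/- Let f : ℤ≥0^J → [0,1] be a probability mass function, f^{(m)} its m-fold convolution, and v an index with n_v ≥ 1. Then ∑_{i ≤ n} (i_v / n_v) · f(i) · f^{(m−1)}(n − i) = f^{(m)}(n) / m, where the sum ranges over all i ∈ ℤ≥0^J with i_j ≤ n_j for all j. -/

import Mathlib

/-- The `m`-fold convolution of a PMF `f` on `ℤ≥0^J`: `conv f 0` is the point mass at `0`
and `conv f (m+1) n = ∑_{i ≤ n} f i · conv f m (n − i)`. -/
def conv {J : ℕ} (f : (Fin J → ℕ) → ℝ) : ℕ → (Fin J → ℕ) → ℝ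
  | 0 => fun n => if n = 0 then 1 else 0
  | m + 1 => fun n => ∑ i ∈ Finset.Iic n, f i * conv f m (n - i)

private lemma conv_swap {J : ℕ} (n : Fin J → ℕ) (F : (Fin J → ℕ) → (Fin J → ℕ) → ℝ) :
    ∑ i ∈ Finset.Iic n, ∑ j ∈ Finset.Iic (n - i), F i j
      = ∑ j ∈ Finset.Iic n, ∑ i ∈ Finset.Iic (n - j), F i j := by
  apply Finset.sum_comm'
  intro i j
  simp only [Finset.mem_Iic, Pi.le_def, Pi.sub_apply]
  constructor
  · rintro ⟨h1, h2⟩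
    constructor <;> intro k <;> have := h1 k <;> have := h2 k <;> omega
  · rintro ⟨h1, h2⟩
    constructor <;> intro k <;> have := h1 k <;> have := h2 k <;> omega

private lemma conv_key {J : ℕ} (f : (Fin J → ℕ) → ℝ) (v : Fin J) :
    ∀ k : ℕ, ∀ n : Fin J → ℕ,
      ((k : ℝ) + 1) * ∑ i ∈ Finset.Iic n, (i v : ℝ) * f i * conv f k (n - i)
        = (n v : ℝ) * conv f (k + 1) n := by
  intro k
  induction k with
  | zero =>
    intro n
    have hterm : ∀ i ∈ Finset.Iic n, i ≠ n → (i v : ℝ) * f i * conv f 0 (n - i) = 0 := by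
      intro i hi hne
      have hin : i ≤ n := Finset.mem_Iic.mp hi
      have hnz : ¬ (n - i = 0) := fun h => hne (le_antisymm hin (tsub_eq_zero_iff_le.mp h))
      simp [conv, hnz]
    have hterm2 : ∀ i ∈ Finset.Iic n, i ≠ n → f i * conv f 0 (n - i) = 0 := by
      intro i hi hne
      have hin : i ≤ n := Finset.mem_Iic.mp hi
      have hnz : ¬ (n - i = 0) := fun h => hne (le_antisymm hin (tsub_eq_zero_iff_le.mp h))
      simp [conv, hnz]
    have h1 : ∑ i ∈ Finset.Iic n, (i v : ℝ) * f i * conv f 0 (n - i) = (n v : ℝ) * f n := by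
      rw [Finset.sum_eq_single_of_mem n (Finset.mem_Iic.mpr le_rfl) hterm]
      simp [conv]
    have h2 : conv f 1 n = f n := by
      show (∑ i ∈ Finset.Iic n, f i * conv f 0 (n - i)) = f n
      rw [Finset.sum_eq_single_of_mem n (Finset.mem_Iic.mpr le_rfl) hterm2]
      simp [conv]
    rw [h1, h2]; ring
  | succ k ih =>
    intro n
    have expand : conv f (k + 1 + 1) n = ∑ i ∈ Finset.Iic n, f i * conv f (k + 1) (n - i) := rfl
    set A : ℝ := ∑ i ∈ Finset.Iic n, (i v : ℝ) * f i * conv f (k + 1) (n - i) with hA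
    have step1 : (n v : ℝ) * conv f (k + 1 + 1) n
        = A + ∑ i ∈ Finset.Iic n, f i * (((n - i) v : ℝ) * conv f (k + 1) (n - i)) := by
      rw [expand, Finset.mul_sum, hA, ← Finset.sum_add_distrib]
      apply Finset.sum_congr rfl
      intro i hi
      have hin : i ≤ n := Finset.mem_Iic.mp hi
      have hv : ((n - i) v : ℝ) = (n v : ℝ) - (i v : ℝ) := by
        have : (n - i) v = n v - i v := rfl
        rw [this, Nat.cast_sub (hin v)]
      rw [hv]; ring
    have step2 : ∑ i ∈ Finset.Iic n, f i * (((n - i) v : ℝ) * conv f (k + 1) (n - i))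
        = ((k : ℝ) + 1) * ∑ i ∈ Finset.Iic n, ∑ j ∈ Finset.Iic (n - i),
            f i * ((j v : ℝ) * f j * conv f k (n - i - j)) := by
      rw [Finset.mul_sum]
      apply Finset.sum_congr rfl
      intro i _
      rw [← ih (n - i)]
      simp only [Finset.mul_sum]
      exact Finset.sum_congr rfl fun j _ => by ring
    have hsub : ∀ i j : Fin J → ℕ, n - i - j = n - j - i := by
      intro i j
      funext x
      show n x - i x - j x = n x - j x - i x
      omega
    have step3 : ∑ i ∈ Finset.Iic n, ∑ j ∈ Finset.Iic (n - i),
            f i * ((j v : ℝ) * f j * conv f k (n - i - j)) = A := by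
      rw [conv_swap n (fun i j => f i * ((j v : ℝ) * f j * conv f k (n - i - j)))]
      rw [hA]
      apply Finset.sum_congr rfl
      intro j _
      have : conv f (k + 1) (n - j) = ∑ i ∈ Finset.Iic (n - j), f i * conv f k (n - j - i) := rfl
      rw [this, Finset.mul_sum]
      apply Finset.sum_congr rfl
      intro i _
      rw [hsub i j]
      ring
    rw [step1, step2, step3]
    push_cast
    ring

/-- Let `f` be a PMF on `ℤ≥0^J`, `f^{(m)}` its `m`-fold convolution, and `v` an index
with `n v ≥ 1`. Then `∑_{i ≤ n} (i_v/n_v) f(i) f^{(m−1)}(n−i) = f^{(m)}(n)/m`. -/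
theorem panjer_symmetry_identity {J : ℕ} (f : (Fin J → ℕ) → ℝ)
    (hfnonneg : ∀ i, 0 ≤ f i) (hfsum : ∑' i, f i = 1)
    (m : ℕ) (hm : 1 ≤ m) (n : Fin J → ℕ) (v : Fin J) (hv : 1 ≤ n v) :
    ∑ i ∈ Finset.Iic n, ((i v : ℝ) / (n v : ℝ)) * f i * conv f (m - 1) (n - i) =
      conv f m n / m := by
  obtain ⟨k, rfl⟩ : ∃ k, m = k + 1 := ⟨m - 1, by omega⟩
  simp only [Nat.add_sub_cancel]
  have key := conv_key f v k n
  have hnv : (n v : ℝ) ≠ 0 := by positivity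
  have hk1 : ((k : ℝ) + 1) ≠ 0 := by positivity
  have hL : ∑ i ∈ Finset.Iic n, ((i v : ℝ) / (n v : ℝ)) * f i * conv f k (n - i)
      = (∑ i ∈ Finset.Iic n, (i v : ℝ) * f i * conv f k (n - i)) / (n v : ℝ) := by
    rw [Finset.sum_div]
    apply Finset.sum_congr rfl
    intro i _
    ring
  rw [hL]
  have hS : ∑ i ∈ Finset.Iic n, (i v : ℝ) * f i * conv f k (n - i)
      = (n v : ℝ) * conv f (k + 1) n / ((k : ℝ) + 1) := by
    field_simp
    linarith [key]
  rw [hS]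
  push_cast
  field_simp
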